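/- Let K be a compact metrizable topological space, σ a continuous semiflow on K, u ∈ K, and LIM a generalized limit. For every continuous φ : K → ℝ and every t ≥ 0, the function T ↦ (1/T)∫_t^{t+T} φ(σ(s,u)) ds (extended by the value φ(σ(t,u)) at T = 0) is bounded and continuous on [0,∞). There exists a Borel probability measure ρ on K such that ∫_K φ dρ = LIM(T ↦ (1/T)∫_t^{t+T} φ(σ(s,u)) ds) for every continuous φ : K → ℝ and every t ≥ 0; in particular the right-hand side does not depend on t. Moreover, ρ is σ-invariant. -/

import Mathlib

set_option linter.unusedSectionVars false
set_option maxHeartbeats 1000000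

open MeasureTheory Filter Topology Set TopologicalSpace
open scoped NNReal ENNReal

namespace TimeAvgRMK

lemma slab_sum (δ : ℝ) (hδ : 0 ≤ δ) (a : ℝ) (ha : 0 ≤ a) (n : ℕ) :
    ∑ i ∈ Finset.range n, min (max (a - (i : ℝ) * δ) 0) δ = min a ((n : ℝ) * δ) := by
  induction n with
  | zero => simp [min_eq_right ha]
  | succ n ih =>
    rw [Finset.sum_range_succ, ih]
    push_cast
    rcases le_total a ((n : ℝ) * δ) with h | h
    · rw [min_eq_left h, max_eq_right (by linarith), min_eq_left hδ,
        min_eq_left (by nlinarith)]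
      ring
    · rw [min_eq_right h, max_eq_left (by linarith)]
      rcases le_total (a - (n : ℝ) * δ) δ with h2 | h2
      · rw [min_eq_left h2, min_eq_left (by nlinarith)]
        ring
      · rw [min_eq_right h2, min_eq_right (by nlinarith)]
        ring

section RMKPart

variable {X : Type*} [TopologicalSpace X]

def testSet (C : Set X) : Set C(X, ℝ) :=
  {f | (∀ x, 0 ≤ f x) ∧ ∀ x ∈ C, 1 ≤ f x}

variable (Λ : C(X, ℝ) → ℝ)

noncomputable def rc (C : Set X) : ℝ := sInf (Λ '' testSet C)

lemma one_mem_testSet (C : Set X) : (1 : C(X, ℝ)) ∈ testSet C :=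
  ⟨fun _ => zero_le_one, fun _ _ => le_refl 1⟩

lemma image_nonempty (C : Set X) : (Λ '' testSet C).Nonempty :=
  ⟨Λ 1, 1, one_mem_testSet C, rfl⟩

variable (hpos : ∀ f : C(X, ℝ), (∀ x, 0 ≤ f x) → 0 ≤ Λ f)

include hpos

lemma bddBelow_image (C : Set X) : BddBelow (Λ '' testSet C) := by
  refine ⟨0, ?_⟩
  rintro b ⟨f, hf, rfl⟩
  exact hpos f hf.1

lemma rc_nonneg (C : Set X) : 0 ≤ rc Λ C := by
  refine le_csInf (image_nonempty Λ C) ?_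
  rintro b ⟨f, hf, rfl⟩
  exact hpos f hf.1

lemma rc_le {C : Set X} {f : C(X, ℝ)} (hf : f ∈ testSet C) : rc Λ C ≤ Λ f :=
  csInf_le (bddBelow_image Λ hpos C) ⟨f, hf, rfl⟩

lemma rc_mono {C₁ C₂ : Set X} (h : C₁ ⊆ C₂) : rc Λ C₁ ≤ rc Λ C₂ := by
  refine csInf_le_csInf (bddBelow_image Λ hpos C₁) (image_nonempty Λ C₂)
    (Set.image_mono ?_)
  rintro f ⟨h1, h2⟩
  exact ⟨h1, fun x hx => h2 x (h hx)⟩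

lemma exists_lt {C : Set X} {ε : ℝ} (hε : 0 < ε) :
    ∃ f ∈ testSet C, Λ f < rc Λ C + ε := by
  obtain ⟨b, ⟨f, hf, rfl⟩, hb⟩ :=
    exists_lt_of_csInf_lt (image_nonempty Λ C) (lt_add_of_pos_right (rc Λ C) hε)
  exact ⟨f, hf, hb⟩

variable (hadd : ∀ f g : C(X, ℝ), Λ (f + g) = Λ f + Λ g)

include hadd

lemma lmono {f g : C(X, ℝ)} (h : ∀ x, f x ≤ g x) : Λ f ≤ Λ g := by
  have h1 : Λ g = Λ f + Λ (g - f) := by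
    rw [← hadd]; congr 1; ext x; simp
  have h2 : 0 ≤ Λ (g - f) := hpos _ (fun x => by simpa using sub_nonneg.2 (h x))
  linarith

lemma lzero : Λ 0 = 0 := by
  have := hadd 0 0
  simp only [add_zero] at this
  linarith

lemma lsum {ι : Type*} (s : Finset ι) (g : ι → C(X, ℝ)) :
    Λ (∑ i ∈ s, g i) = ∑ i ∈ s, Λ (g i) := by
  classical
  induction s using Finset.induction_on with
  | empty => simpa using lzero Λ hpos hadd
  | insert a s hni ih => rw [Finset.sum_insert hni, Finset.sum_insert hni, hadd, ih]

lemma rc_univ : rc Λ (Set.univ : Set X) = Λ 1 := by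
  refine le_antisymm (rc_le Λ hpos (one_mem_testSet _)) (le_csInf (image_nonempty Λ _) ?_)
  rintro b ⟨f, hf, rfl⟩
  exact lmono Λ hpos hadd (fun x => by simpa using hf.2 x (Set.mem_univ x))

lemma rc_sup_le (K₁ K₂ : Set X) : rc Λ (K₁ ∪ K₂) ≤ rc Λ K₁ + rc Λ K₂ := by
  refine le_of_forall_pos_le_add ?_
  intro ε hε
  obtain ⟨f₁, hf₁, hΛ₁⟩ := exists_lt Λ hpos (C := K₁) (half_pos hε)
  obtain ⟨f₂, hf₂, hΛ₂⟩ := exists_lt Λ hpos (C := K₂) (half_pos hε)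
  have hmem : f₁ + f₂ ∈ testSet (K₁ ∪ K₂) := by
    constructor
    · intro x; exact add_nonneg (hf₁.1 x) (hf₂.1 x)
    · rintro x (hx | hx)
      · simpa using le_add_of_le_of_nonneg (hf₁.2 x hx) (hf₂.1 x)
      · simpa using le_add_of_nonneg_of_le (hf₁.1 x) (hf₂.2 x hx)
  have := rc_le Λ hpos hmem
  rw [hadd] at this
  linarith

lemma rc_sup_disjoint [NormalSpace X] (K₁ K₂ : Set X) (hd : Disjoint K₁ K₂)
    (h₁ : IsClosed K₁) (h₂ : IsClosed K₂) :
    rc Λ (K₁ ∪ K₂) = rc Λ K₁ + rc Λ K₂ := by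
  refine le_antisymm (rc_sup_le Λ hpos hadd K₁ K₂) (le_csInf (image_nonempty Λ _) ?_)
  rintro b ⟨f, hf, rfl⟩
  obtain ⟨g, hg1, hg2, hg01⟩ := exists_continuous_zero_one_of_isClosed h₁ h₂ hd
  have hmem₁ : f * (1 - g) ∈ testSet K₁ := by
    constructor
    · intro x
      exact mul_nonneg (hf.1 x) (by simpa using (hg01 x).2)
    · intro x hx
      have hx0 : g x = 0 := hg1 hx
      simpa [hx0] using hf.2 x (Or.inl hx)
  have hmem₂ : f * g ∈ testSet K₂ := by
    constructor
    · intro x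
      exact mul_nonneg (hf.1 x) (hg01 x).1
    · intro x hx
      have hx1 : g x = 1 := hg2 hx
      simpa [hx1] using hf.2 x (Or.inr hx)
  have hsum : f * (1 - g) + f * g = f := by ext x; simp; ring
  have h1 := rc_le Λ hpos hmem₁
  have h2 := rc_le Λ hpos hmem₂
  have h3 : Λ (f * (1 - g)) + Λ (f * g) = Λ f := by rw [← hadd, hsum]
  linarith

noncomputable def rieszC [NormalSpace X] : Content X where
  toFun K := Real.toNNReal (rc Λ K)
  mono' K₁ K₂ h := Real.toNNReal_mono (rc_mono Λ hpos h)
  sup_disjoint' K₁ K₂ hd hc₁ hc₂ := by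
    simp only [Compacts.coe_sup]
    rw [rc_sup_disjoint Λ hpos hadd _ _ hd hc₁ hc₂,
      Real.toNNReal_add (rc_nonneg Λ hpos _) (rc_nonneg Λ hpos _)]
  sup_le' K₁ K₂ := by
    simp only [Compacts.coe_sup]
    calc Real.toNNReal (rc Λ (↑K₁ ∪ ↑K₂)) ≤ Real.toNNReal (rc Λ K₁ + rc Λ K₂) :=
      Real.toNNReal_mono (rc_sup_le Λ hpos hadd _ _)
    _ = _ := Real.toNNReal_add (rc_nonneg Λ hpos _) (rc_nonneg Λ hpos _)

section Meas

variable [CompactSpace X] [NormalSpace X] [R1Space X] [MeasurableSpace X] [BorelSpace X]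

noncomputable def rμ : Measure X := (rieszC Λ hpos hadd).measure

set_option maxHeartbeats 1000000 in
lemma rμ_univ : rμ Λ hpos hadd Set.univ = ENNReal.ofReal (Λ 1) := by
  have h1 : rμ Λ hpos hadd Set.univ = (rieszC Λ hpos hadd).outerMeasure Set.univ :=
    (rieszC Λ hpos hadd).measure_apply MeasurableSet.univ
  have h2 : (rieszC Λ hpos hadd).outerMeasure Set.univ
      = (rieszC Λ hpos hadd).innerContent ⟨Set.univ, isOpen_univ⟩ :=
    (rieszC Λ hpos hadd).outerMeasure_opens ⟨Set.univ, isOpen_univ⟩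
  have h3 := (rieszC Λ hpos hadd).innerContent_of_isCompact
    (K := (Set.univ : Set X)) isCompact_univ isOpen_univ
  rw [h1, h2, h3]
  show ((Real.toNNReal (rc Λ (Set.univ : Set X)) : ℝ≥0) : ℝ≥0∞) = _
  rw [rc_univ Λ hpos hadd, ENNReal.ofReal]

variable (hsmul : ∀ (c : ℝ) (f : C(X, ℝ)), Λ (c • f) = c * Λ f)
variable (hΛ1 : Λ 1 = 1)

include hΛ1 in
lemma rμ_prob : IsProbabilityMeasure (rμ Λ hpos hadd) :=
  ⟨by rw [rμ_univ Λ hpos hadd, hΛ1, ENNReal.ofReal_one]⟩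

include hΛ1 in
lemma cmIntegrable (g : C(X, ℝ)) : Integrable g (rμ Λ hpos hadd) := by
  haveI := rμ_prob Λ hpos hadd hΛ1
  exact (BoundedContinuousFunction.mkOfCompact g).integrable (μ := rμ Λ hpos hadd)

include hsmul hΛ1 in
lemma key_ineq (f : C(X, ℝ)) (hf : ∀ x, 0 ≤ f x) {δ : ℝ} (hδ : 0 < δ) (m : ℕ)
    (hm : ‖f‖ ≤ ((m : ℝ) + 1) * δ) :
    ∫ x, f x ∂(rμ Λ hpos hadd) ≤ Λ f + δ := by
  haveI := rμ_prob Λ hpos hadd hΛ1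
  set μ := rμ Λ hpos hadd with hμdef
  -- slab functions
  set φi : ℕ → C(X, ℝ) := fun i =>
    ⟨fun x => min (max (f x - (i : ℝ) * δ) 0) δ,
      (((map_continuous f).sub continuous_const).max continuous_const).min continuous_const⟩
    with hφi
  have hφi_apply : ∀ i x, φi i x = min (max (f x - (i : ℝ) * δ) 0) δ := fun i x => rfl
  have hφi_nonneg : ∀ i x, 0 ≤ φi i x := fun i x =>
    le_min (le_max_right _ _) hδ.le
  -- sum identity
  have hsum_eq : ∀ x, ∑ i ∈ Finset.range (m + 1), φi i x = f x := by
    intro x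
    have h1 : ∑ i ∈ Finset.range (m + 1), φi i x
        = min (f x) (((m : ℝ) + 1) * δ) := by
      rw [show (((m : ℝ) + 1) * δ) = (((m + 1 : ℕ) : ℝ)) * δ by push_cast; ring]
      exact slab_sum δ hδ.le (f x) (hf x) (m + 1)
    rw [h1, min_eq_left]
    calc f x ≤ |f x| := le_abs_self _
    _ ≤ ‖f‖ := by simpa [Real.norm_eq_abs] using f.norm_coe_le_norm x
    _ ≤ _ := hm
  have hsum_cm : (∑ i ∈ Finset.range (m + 1), φi i) = f := by
    ext x
    simpa using hsum_eq x
  -- the open and closed level sets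
  set U : ℕ → Set X := fun i => {x | (i : ℝ) * δ < f x} with hU
  set Cs : ℕ → Set X := fun i => {x | (i : ℝ) * δ ≤ f x} with hCs
  have hUopen : ∀ i, IsOpen (U i) := fun i =>
    isOpen_lt continuous_const (map_continuous f)
  have hCclosed : ∀ i, IsClosed (Cs i) := fun i =>
    isClosed_le continuous_const (map_continuous f)
  -- integral bound
  have hint : ∀ i, ∫ x, φi i x ∂μ ≤ δ * (μ (U i)).toReal := by
    intro i
    have hle : ∀ x, φi i x ≤ Set.indicator (U i) (fun _ => δ) x := by
      intro x
      by_cases hx : x ∈ U i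
      · rw [Set.indicator_of_mem hx]
        exact min_le_right _ _
      · rw [Set.indicator_of_notMem hx]
        have : f x ≤ (i : ℝ) * δ := le_of_not_gt hx
        rw [hφi_apply, max_eq_right (by linarith), min_eq_left hδ.le]
    calc ∫ x, φi i x ∂μ ≤ ∫ x, Set.indicator (U i) (fun _ => δ) x ∂μ := by
          refine integral_mono (cmIntegrable Λ hpos hadd hΛ1 (φi i)) ?_ hle
          exact (integrable_const δ).indicator (hUopen i).measurableSet
    _ = (μ (U i)).toReal • δ := integral_indicator_const δ (hUopen i).measurableSet
    _ = δ * (μ (U i)).toReal := by rw [smul_eq_mul, mul_comm]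
  -- content bound for measures of open sets
  have hmeas_le : ∀ i, (μ (U i)).toReal ≤ rc Λ (Cs i) := by
    intro i
    have hsub : U i ⊆ Cs i := Set.setOf_subset_setOf.mpr (fun x => le_of_lt)
    have h1 : μ (U i) ≤ ((rieszC Λ hpos hadd).toFun ⟨Cs i, (hCclosed i).isCompact⟩ : ℝ≥0∞) := by
      rw [hμdef, rμ, Content.measure_apply _ (hUopen i).measurableSet]
      exact Content.outerMeasure_le _ ⟨U i, hUopen i⟩ ⟨Cs i, (hCclosed i).isCompact⟩ hsub
    have h2 : (μ (U i)).toReal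
        ≤ (((rieszC Λ hpos hadd).toFun ⟨Cs i, (hCclosed i).isCompact⟩ : ℝ≥0∞)).toReal :=
      ENNReal.toReal_mono ENNReal.coe_ne_top h1
    refine h2.trans ?_
    show ((Real.toNNReal (rc Λ (Cs i)) : ℝ≥0∞)).toReal ≤ _
    rw [ENNReal.coe_toReal, Real.coe_toNNReal _ (rc_nonneg Λ hpos _)]
  -- functional bound
  have hΛφ : ∀ i, δ * rc Λ (Cs (i + 1)) ≤ Λ (φi i) := by
    intro i
    have hmem : δ⁻¹ • φi i ∈ testSet (Cs (i + 1)) := by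
      constructor
      · intro x
        simpa using mul_nonneg (inv_nonneg.2 hδ.le) (hφi_nonneg i x)
      · intro x hx
        have hx' : ((i : ℝ) + 1) * δ ≤ f x := by
          have h0 : ((i + 1 : ℕ) : ℝ) * δ ≤ f x := hx
          push_cast at h0
          linarith
        have h1 : φi i x = δ := by
          rw [hφi_apply, max_eq_left (by nlinarith), min_eq_right (by nlinarith)]
        have : (δ⁻¹ • φi i) x = δ⁻¹ * φi i x := rfl
        rw [this, h1, inv_mul_cancel₀ hδ.ne']
    have h1 := rc_le Λ hpos hmem
    rw [hsmul] at h1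
    have h2 := mul_le_mul_of_nonneg_left h1 hδ.le
    calc δ * rc Λ (Cs (i + 1)) ≤ δ * (δ⁻¹ * Λ (φi i)) := h2
    _ = Λ (φi i) := by field_simp
  have hU0 : (μ (U 0)).toReal ≤ 1 := by
    have h1 : μ (U 0) ≤ 1 := prob_le_one
    calc (μ (U 0)).toReal ≤ (1 : ℝ≥0∞).toReal :=
      ENNReal.toReal_mono (by simp) h1
    _ = 1 := by simp
  -- chain
  have hΛpos : ∀ i, 0 ≤ Λ (φi i) := fun i => hpos _ (hφi_nonneg i)
  calc ∫ x, f x ∂μ = ∫ x, ∑ i ∈ Finset.range (m + 1), φi i x ∂μ := by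
        refine integral_congr_ae (Filter.Eventually.of_forall fun x => ?_)
        exact (hsum_eq x).symm
  _ = ∑ i ∈ Finset.range (m + 1), ∫ x, φi i x ∂μ :=
      integral_finset_sum _ (fun i _ => cmIntegrable Λ hpos hadd hΛ1 (φi i))
  _ = (∑ i ∈ Finset.range m, ∫ x, φi (i + 1) x ∂μ) + ∫ x, φi 0 x ∂μ :=
      Finset.sum_range_succ' _ m
  _ ≤ (∑ i ∈ Finset.range m, δ * (μ (U (i + 1))).toReal) + δ * (μ (U 0)).toReal :=
      add_le_add (Finset.sum_le_sum fun i _ => hint _) (hint 0)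
  _ ≤ (∑ i ∈ Finset.range m, Λ (φi i)) + δ * 1 :=
      add_le_add
        (Finset.sum_le_sum fun i _ =>
          le_trans (mul_le_mul_of_nonneg_left (hmeas_le _) hδ.le) (hΛφ i))
        (mul_le_mul_of_nonneg_left hU0 hδ.le)
  _ ≤ (∑ i ∈ Finset.range (m + 1), Λ (φi i)) + δ := by
      rw [mul_one]
      exact add_le_add_left
        (Finset.sum_le_sum_of_subset_of_nonneg
          (Finset.range_subset_range.2 (Nat.le_succ m)) (fun i _ _ => hΛpos i)) δ
  _ = Λ f + δ := by
      rw [← lsum Λ hpos hadd, hsum_cm]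

include hsmul hΛ1 in
lemma integral_le (f : C(X, ℝ)) (hf : ∀ x, 0 ≤ f x) :
    ∫ x, f x ∂(rμ Λ hpos hadd) ≤ Λ f := by
  refine le_of_forall_pos_le_add ?_
  intro ε hε
  set m := ⌈‖f‖ / ε⌉₊ with hm
  refine key_ineq Λ hpos hadd hsmul hΛ1 f hf hε m ?_
  have h1 : ‖f‖ / ε ≤ (m : ℝ) := Nat.le_ceil _
  have h2 : ‖f‖ ≤ (m : ℝ) * ε := by
    rw [div_le_iff₀ hε] at h1
    linarith
  nlinarith

include hsmul hΛ1 in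
lemma integral_eq (f : C(X, ℝ)) : ∫ x, f x ∂(rμ Λ hpos hadd) = Λ f := by
  haveI := rμ_prob Λ hpos hadd hΛ1
  set μ := rμ Λ hpos hadd with hμdef
  have hconst : ∀ c : ℝ, Λ (ContinuousMap.const X c) = c := by
    intro c
    have h : (ContinuousMap.const X c) = c • (1 : C(X, ℝ)) := by ext x; simp
    rw [h, hsmul, hΛ1, mul_one]
  have hbound : ∀ x, |f x| ≤ ‖f‖ := fun x => by
    simpa [Real.norm_eq_abs] using f.norm_coe_le_norm x
  have hiconst : ∀ c : ℝ, ∫ x, (ContinuousMap.const X c) x ∂μ = c := by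
    intro c
    simp [integral_const]
  have h1 : ∫ x, (f + ContinuousMap.const X ‖f‖) x ∂μ ≤ Λ (f + ContinuousMap.const X ‖f‖) :=
    integral_le Λ hpos hadd hsmul hΛ1 _ (fun x => by
      have := (abs_le.1 (hbound x)).1
      simp only [ContinuousMap.add_apply, ContinuousMap.const_apply]
      linarith)
  have h2 : ∫ x, (ContinuousMap.const X ‖f‖ - f) x ∂μ ≤ Λ (ContinuousMap.const X ‖f‖ - f) :=
    integral_le Λ hpos hadd hsmul hΛ1 _ (fun x => by
      have := (abs_le.1 (hbound x)).2
      simp only [ContinuousMap.sub_apply, ContinuousMap.const_apply]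
      linarith)
  have e1 : ∫ x, (f + ContinuousMap.const X ‖f‖) x ∂μ
      = ∫ x, f x ∂μ + ‖f‖ := by
    rw [show (fun x => (f + ContinuousMap.const X ‖f‖) x) = fun x => f x + ‖f‖ from rfl]
    rw [integral_add (cmIntegrable Λ hpos hadd hΛ1 f) (integrable_const _)]
    simp
    rfl
  have e2 : ∫ x, (ContinuousMap.const X ‖f‖ - f) x ∂μ
      = ‖f‖ - ∫ x, f x ∂μ := by
    rw [show (fun x => (ContinuousMap.const X ‖f‖ - f) x) = fun x => ‖f‖ - f x from rfl]
    rw [integral_sub (integrable_const _) (cmIntegrable Λ hpos hadd hΛ1 f)]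
    simp
    rfl
  have e3 : Λ (f + ContinuousMap.const X ‖f‖) = Λ f + ‖f‖ := by
    rw [hadd, hconst]
  have e4 : Λ (ContinuousMap.const X ‖f‖ - f) = ‖f‖ - Λ f := by
    have h : (ContinuousMap.const X ‖f‖ - f) = ContinuousMap.const X ‖f‖ + (-1 : ℝ) • f := by
      ext x; simp [sub_eq_add_neg]
    rw [h, hadd, hconst, hsmul]
    ring
  rw [e1, e3] at h1
  rw [e2, e4] at h2
  linarith

end Meas

end RMKPart


section TimeAvg

variable {K : Type*} [TopologicalSpace K] [CompactSpace K]
  [TopologicalSpace.MetrizableSpace K] [MeasurableSpace K] [BorelSpace K]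
  (σ : ℝ≥0 → K → K) (u : K)
  (hσcont : Continuous fun p : ℝ≥0 × K => σ p.1 p.2)

/-- The observable along the trajectory. -/
noncomputable def orb (φ : C(K, ℝ)) : ℝ → ℝ := fun s => φ (σ s.toNNReal u)

include hσcont in
lemma orb_continuous (φ : C(K, ℝ)) : Continuous (orb σ u φ) := by
  refine (map_continuous φ).comp ?_
  exact hσcont.comp (continuous_real_toNNReal.prodMk continuous_const)

lemma orb_bound (φ : C(K, ℝ)) (s : ℝ) : ‖orb σ u φ s‖ ≤ ‖φ‖ :=
  φ.norm_coe_le_norm _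

/-- The time-average function. -/
noncomputable def gA (φ : C(K, ℝ)) (t : ℝ≥0) : ℝ≥0 → ℝ := fun T =>
  if T = 0 then φ (σ t u)
  else (T : ℝ)⁻¹ * ∫ s in (t : ℝ)..((t : ℝ) + (T : ℝ)), orb σ u φ s

include hσcont

lemma gA_bound (φ : C(K, ℝ)) (t : ℝ≥0) (T : ℝ≥0) : ‖gA σ u φ t T‖ ≤ ‖φ‖ := by
  rcases eq_or_ne T 0 with h | h
  · subst h
    simpa [gA] using φ.norm_coe_le_norm (σ t u)
  · have hT : (0 : ℝ) < T := by exact_mod_cast zero_lt_iff.mpr h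
    rw [gA, if_neg h, norm_mul]
    have h1 : ‖∫ s in (t : ℝ)..((t : ℝ) + (T : ℝ)), orb σ u φ s‖ ≤ ‖φ‖ * |((t : ℝ) + T) - t| :=
      intervalIntegral.norm_integral_le_of_norm_le_const (fun s _ => orb_bound σ u φ s)
    have h2 : |((t : ℝ) + T) - t| = (T : ℝ) := by
      rw [add_sub_cancel_left, abs_of_nonneg T.coe_nonneg]
    rw [h2] at h1
    calc ‖((T : ℝ))⁻¹‖ * ‖∫ s in (t : ℝ)..((t : ℝ) + (T : ℝ)), orb σ u φ s‖
        ≤ ‖((T : ℝ))⁻¹‖ * (‖φ‖ * T) := by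
          exact mul_le_mul_of_nonneg_left h1 (norm_nonneg _)
    _ = ‖φ‖ := by
        rw [Real.norm_eq_abs, abs_of_nonneg (inv_nonneg.2 hT.le)]
        field_simp

lemma gA_continuous (φ : C(K, ℝ)) (t : ℝ≥0) : Continuous (gA σ u φ t) := by
  have hψ : Continuous (orb σ u φ) := orb_continuous σ u hσcont φ
  rw [continuous_iff_continuousAt]
  intro T₀
  rcases eq_or_ne T₀ 0 with h0 | h0
  · -- continuity at 0
    subst h0
    refine Metric.continuousAt_iff.2 ?_
    intro ε hε
    obtain ⟨δ, hδpos, hδ⟩ := Metric.continuousAt_iff.1 hψ.continuousAt (ε / 2) (half_pos hε)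
    refine ⟨δ, hδpos, ?_⟩
    intro T hT
    rcases eq_or_ne T 0 with h | h
    · subst h; simpa using hε
    · have hTpos : (0 : ℝ) < T := by exact_mod_cast zero_lt_iff.mpr h
      have hTδ : (T : ℝ) < δ := by
        have h' : dist T 0 < δ := hT
        rw [NNReal.dist_eq] at h'
        simpa [abs_of_nonneg T.coe_nonneg] using h'
      have hval0 : gA σ u φ t 0 = orb σ u φ (t : ℝ) := by
        simp [gA, orb, Real.toNNReal_coe]
      have hvalT : gA σ u φ t T
          = (T : ℝ)⁻¹ * ∫ s in (t : ℝ)..((t : ℝ) + (T : ℝ)), orb σ u φ s := by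
        rw [gA, if_neg h]
      have hconst : ((T : ℝ))⁻¹ * ∫ _s in (t : ℝ)..((t : ℝ) + (T : ℝ)), orb σ u φ (t : ℝ)
          = orb σ u φ (t : ℝ) := by
        rw [intervalIntegral.integral_const, add_sub_cancel_left, smul_eq_mul]
        field_simp
      have hii1 : IntervalIntegrable (orb σ u φ) volume (t : ℝ) ((t : ℝ) + (T : ℝ)) :=
        hψ.intervalIntegrable _ _
      have hii2 : IntervalIntegrable (fun _ => orb σ u φ (t : ℝ)) volume
          (t : ℝ) ((t : ℝ) + (T : ℝ)) := intervalIntegrable_const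
      have hdiff : gA σ u φ t T - gA σ u φ t 0
          = (T : ℝ)⁻¹ * ∫ s in (t : ℝ)..((t : ℝ) + (T : ℝ)),
              (orb σ u φ s - orb σ u φ (t : ℝ)) := by
        rw [intervalIntegral.integral_sub hii1 hii2, mul_sub, hconst, hvalT, hval0]
      have hbnd : ‖∫ s in (t : ℝ)..((t : ℝ) + (T : ℝ)),
          (orb σ u φ s - orb σ u φ (t : ℝ))‖ ≤ (ε / 2) * |((t : ℝ) + T) - t| := by
        refine intervalIntegral.norm_integral_le_of_norm_le_const ?_
        intro s hs
        rw [Set.uIoc_of_le (by linarith : (t : ℝ) ≤ (t : ℝ) + T)] at hs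
        have hst : dist s (t : ℝ) < δ := by
          rw [Real.dist_eq, abs_of_nonneg (by linarith [hs.1.le] : (0:ℝ) ≤ s - t)]
          linarith [hs.2]
        have := hδ hst
        rw [Real.dist_eq] at this
        exact le_of_lt (by simpa [Real.norm_eq_abs] using this)
      rw [Real.dist_eq]
      have habs : |gA σ u φ t T - gA σ u φ t 0| ≤ (T : ℝ)⁻¹ * ((ε / 2) * T) := by
        rw [hdiff, abs_mul, abs_of_nonneg (inv_nonneg.2 hTpos.le)]
        refine mul_le_mul_of_nonneg_left ?_ (inv_nonneg.2 hTpos.le)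
        simpa [Real.norm_eq_abs, add_sub_cancel_left,
          abs_of_nonneg T.coe_nonneg] using hbnd
      have : (T : ℝ)⁻¹ * ((ε / 2) * T) = ε / 2 := by field_simp
      rw [this] at habs
      calc |gA σ u φ t T - gA σ u φ t 0| ≤ ε / 2 := habs
      _ < ε := by linarith
  · -- continuity away from 0
    have hT₀ : ((T₀ : ℝ)) ≠ 0 := by exact_mod_cast h0
    have hG : Continuous fun x : ℝ => ∫ s in (t : ℝ)..x, orb σ u φ s :=
      intervalIntegral.continuous_primitive (fun a b => hψ.intervalIntegrable a b) (t : ℝ)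
    have hcont2 : ContinuousAt
        (fun T : ℝ≥0 => (T : ℝ)⁻¹ * ∫ s in (t : ℝ)..((t : ℝ) + (T : ℝ)), orb σ u φ s) T₀ := by
      refine ContinuousAt.mul ?_ ?_
      · exact (NNReal.continuous_coe.continuousAt).inv₀ hT₀
      · exact (hG.continuousAt).comp
          ((continuous_const.add NNReal.continuous_coe).continuousAt)
    refine hcont2.congr ?_
    have hne : ∀ᶠ T in 𝓝 T₀, T ≠ 0 := eventually_ne_nhds h0
    filter_upwards [hne] with T hT
    rw [gA, if_neg hT]

/-- The time-average as a bounded continuous function. -/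
noncomputable def GB (φ : C(K, ℝ)) (t : ℝ≥0) : BoundedContinuousFunction ℝ≥0 ℝ :=
  BoundedContinuousFunction.ofNormedAddCommGroup (gA σ u φ t)
    (gA_continuous σ u hσcont φ t) ‖φ‖ (gA_bound σ u hσcont φ t)

lemma GB_apply (φ : C(K, ℝ)) (t : ℝ≥0) (T : ℝ≥0) : GB σ u hσcont φ t T = gA σ u φ t T := rfl

lemma GB_spec (φ : C(K, ℝ)) (t : ℝ≥0) (T : ℝ≥0) :
    GB σ u hσcont φ t T = if T = 0 then φ (σ t u)
      else (T : ℝ)⁻¹ * ∫ s in (t : ℝ)..((t : ℝ) + (T : ℝ)), φ (σ s.toNNReal u) := rfl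


variable (hσ0 : ∀ v, σ 0 v = v)
variable (hσadd : ∀ (t s : ℝ≥0) (v : K), σ (t + s) v = σ t (σ s v))
variable (LIM : BoundedContinuousFunction ℝ≥0 ℝ →ₗ[ℝ] ℝ)

lemma GB_add (φ φ' : C(K, ℝ)) (t : ℝ≥0) :
    GB σ u hσcont (φ + φ') t = GB σ u hσcont φ t + GB σ u hσcont φ' t := by
  ext T
  simp only [BoundedContinuousFunction.coe_add, Pi.add_apply, GB_apply, gA]
  rcases eq_or_ne T 0 with h | h
  · simp [h]
  · rw [if_neg h, if_neg h, if_neg h]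
    have horb : orb σ u (φ + φ') = fun s => orb σ u φ s + orb σ u φ' s := rfl
    rw [horb, intervalIntegral.integral_add
      ((orb_continuous σ u hσcont φ).intervalIntegrable _ _)
      ((orb_continuous σ u hσcont φ').intervalIntegrable _ _)]
    ring

lemma GB_smul (c : ℝ) (φ : C(K, ℝ)) (t : ℝ≥0) :
    GB σ u hσcont (c • φ) t = c • GB σ u hσcont φ t := by
  ext T
  simp only [BoundedContinuousFunction.coe_smul, Pi.smul_apply, GB_apply, gA, smul_eq_mul]
  rcases eq_or_ne T 0 with h | h
  · simp [h]
  · rw [if_neg h, if_neg h]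
    have horb : orb σ u (c • φ) = fun s => c * orb σ u φ s := by
      funext s; simp [orb]
    rw [horb, intervalIntegral.integral_const_mul]
    ring

lemma GB_nonneg (φ : C(K, ℝ)) (hφ : ∀ x, 0 ≤ φ x) (t : ℝ≥0) (T : ℝ≥0) :
    0 ≤ GB σ u hσcont φ t T := by
  rw [GB_apply, gA]
  rcases eq_or_ne T 0 with h | h
  · rw [if_pos h]; exact hφ _
  · rw [if_neg h]
    refine mul_nonneg (inv_nonneg.2 T.coe_nonneg) ?_
    refine intervalIntegral.integral_nonneg (le_add_of_nonneg_right T.coe_nonneg) ?_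
    intro s _
    exact hφ _

lemma GB_one (t : ℝ≥0) (T : ℝ≥0) : GB σ u hσcont 1 t T = 1 := by
  rw [GB_apply, gA]
  rcases eq_or_ne T 0 with h | h
  · rw [if_pos h]; simp
  · have hT : ((T : ℝ)) ≠ 0 := by exact_mod_cast h
    rw [if_neg h]
    have horb : orb σ u (1 : C(K, ℝ)) = fun _ => (1 : ℝ) := rfl
    rw [horb, intervalIntegral.integral_const, add_sub_cancel_left, smul_eq_mul]
    field_simp

variable (hLIMlim : ∀ (g : BoundedContinuousFunction ℝ≥0 ℝ) (a : ℝ),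
  Tendsto (fun T => g T) atTop (𝓝 a) → LIM g = a)

include hLIMlim in
lemma tindep (φ : C(K, ℝ)) (t : ℝ≥0) :
    LIM (GB σ u hσcont φ t) = LIM (GB σ u hσcont φ 0) := by
  have hψ : Continuous (orb σ u φ) := orb_continuous σ u hσcont φ
  have hii : ∀ a b : ℝ, IntervalIntegrable (orb σ u φ) volume a b :=
    fun a b => hψ.intervalIntegrable a b
  have htend : Tendsto (fun T => (GB σ u hσcont φ t - GB σ u hσcont φ 0) T) atTop (𝓝 0) := by
    refine squeeze_zero_norm'
        (a := fun T : ℝ≥0 => (T:ℝ)⁻¹ * (2 * (t:ℝ) * ‖φ‖)) ?_ ?_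
    · filter_upwards [eventually_ge_atTop (1 : ℝ≥0)] with T hT1
      have hTne : T ≠ 0 := (lt_of_lt_of_le zero_lt_one hT1).ne'
      have hTpos : (0 : ℝ) < T := by exact_mod_cast zero_lt_iff.mpr hTne
      have c1 : (∫ s in (0:ℝ)..(t:ℝ), orb σ u φ s)
          + ∫ s in (t:ℝ)..((t:ℝ) + (T:ℝ)), orb σ u φ s
          = ∫ s in (0:ℝ)..((t:ℝ) + (T:ℝ)), orb σ u φ s :=
        intervalIntegral.integral_add_adjacent_intervals (hii _ _) (hii _ _)
      have c2 : (∫ s in (0:ℝ)..(T:ℝ), orb σ u φ s)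
          + ∫ s in (T:ℝ)..((t:ℝ) + (T:ℝ)), orb σ u φ s
          = ∫ s in (0:ℝ)..((t:ℝ) + (T:ℝ)), orb σ u φ s :=
        intervalIntegral.integral_add_adjacent_intervals (hii _ _) (hii _ _)
      have hval : (GB σ u hσcont φ t - GB σ u hσcont φ 0) T
          = (T:ℝ)⁻¹ * ((∫ s in (T:ℝ)..((t:ℝ) + (T:ℝ)), orb σ u φ s)
              - ∫ s in (0:ℝ)..(t:ℝ), orb σ u φ s) := by
        have e : (GB σ u hσcont φ t - GB σ u hσcont φ 0) T
            = gA σ u φ t T - gA σ u φ 0 T := rfl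
        rw [e, gA, gA, if_neg hTne, if_neg hTne]
        simp only [NNReal.coe_zero, zero_add]
        have : (∫ s in (t:ℝ)..((t:ℝ) + (T:ℝ)), orb σ u φ s)
            - ∫ s in (0:ℝ)..(T:ℝ), orb σ u φ s
            = (∫ s in (T:ℝ)..((t:ℝ) + (T:ℝ)), orb σ u φ s)
              - ∫ s in (0:ℝ)..(t:ℝ), orb σ u φ s := by linarith
        rw [← mul_sub, this, mul_sub]
      have b1 : ‖∫ s in (T:ℝ)..((t:ℝ) + (T:ℝ)), orb σ u φ s‖ ≤ ‖φ‖ * (t:ℝ) := by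
        have := intervalIntegral.norm_integral_le_of_norm_le_const
          (C := ‖φ‖) (a := (T:ℝ)) (b := (t:ℝ) + (T:ℝ)) (fun s _ => orb_bound σ u φ s)
        simpa [abs_of_nonneg t.coe_nonneg] using this
      have b2 : ‖∫ s in (0:ℝ)..(t:ℝ), orb σ u φ s‖ ≤ ‖φ‖ * (t:ℝ) := by
        have := intervalIntegral.norm_integral_le_of_norm_le_const
          (C := ‖φ‖) (a := (0:ℝ)) (b := (t:ℝ)) (fun s _ => orb_bound σ u φ s)
        simpa [abs_of_nonneg t.coe_nonneg] using this
      rw [hval, norm_mul, Real.norm_eq_abs, Real.norm_eq_abs,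
        abs_of_nonneg (inv_nonneg.2 hTpos.le)]
      calc (T:ℝ)⁻¹ * |(∫ s in (T:ℝ)..((t:ℝ) + (T:ℝ)), orb σ u φ s)
            - ∫ s in (0:ℝ)..(t:ℝ), orb σ u φ s|
          ≤ (T:ℝ)⁻¹ * (‖φ‖ * (t:ℝ) + ‖φ‖ * (t:ℝ)) := by
            refine mul_le_mul_of_nonneg_left ?_ (inv_nonneg.2 hTpos.le)
            calc |(∫ s in (T:ℝ)..((t:ℝ) + (T:ℝ)), orb σ u φ s)
                - ∫ s in (0:ℝ)..(t:ℝ), orb σ u φ s|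
                ≤ ‖∫ s in (T:ℝ)..((t:ℝ) + (T:ℝ)), orb σ u φ s‖
                  + ‖∫ s in (0:ℝ)..(t:ℝ), orb σ u φ s‖ := abs_sub _ _
            _ ≤ ‖φ‖ * (t:ℝ) + ‖φ‖ * (t:ℝ) := add_le_add b1 b2
      _ = (T:ℝ)⁻¹ * (2 * (t:ℝ) * ‖φ‖) := by ring
    · have h1 : Tendsto (fun T : ℝ≥0 => (T : ℝ)) atTop atTop :=
        NNReal.tendsto_coe_atTop.2 tendsto_id
      have h2 := (tendsto_inv_atTop_zero.comp h1).mul_const (2 * (t:ℝ) * ‖φ‖)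
      simpa using h2
  have h0 := hLIMlim _ 0 htend
  rw [map_sub] at h0
  linarith

include hσ0 hσadd in
lemma GB_shift (φ : C(K, ℝ)) (τ : ℝ≥0) (hστ : Continuous fun v => σ τ v) :
    GB σ u hσcont (φ.comp ⟨fun v => σ τ v, hστ⟩) 0 = GB σ u hσcont φ τ := by
  ext T
  rcases eq_or_ne T 0 with h | h
  · subst h
    show gA σ u (φ.comp ⟨fun v => σ τ v, hστ⟩) 0 0 = gA σ u φ τ 0
    rw [gA, gA, if_pos rfl, if_pos rfl]
    simp [hσ0 u]
  · show gA σ u (φ.comp ⟨fun v => σ τ v, hστ⟩) 0 T = gA σ u φ τ T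
    rw [gA, gA, if_neg h, if_neg h]
    simp only [NNReal.coe_zero, zero_add]
    have e1 : ∫ s in (0:ℝ)..(T:ℝ), orb σ u (φ.comp ⟨fun v => σ τ v, hστ⟩) s
        = ∫ s in (0:ℝ)..(T:ℝ), orb σ u φ ((τ:ℝ) + s) := by
      refine intervalIntegral.integral_congr ?_
      intro s hs
      rw [Set.uIcc_of_le T.coe_nonneg] at hs
      have hs0 : (0:ℝ) ≤ s := hs.1
      show φ (σ τ (σ s.toNNReal u)) = φ (σ ((τ:ℝ) + s).toNNReal u)
      rw [Real.toNNReal_add τ.coe_nonneg hs0, Real.toNNReal_coe, hσadd]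
    have e2 : ∫ s in (0:ℝ)..(T:ℝ), orb σ u φ ((τ:ℝ) + s)
        = ∫ s in ((τ:ℝ) + 0)..((τ:ℝ) + (T:ℝ)), orb σ u φ s :=
      intervalIntegral.integral_comp_add_left (orb σ u φ) ((τ:ℝ))
    rw [e1, e2, add_zero]

end TimeAvg


end TimeAvgRMK

open TimeAvgRMK in
/-- For a continuous semiflow `σ` on a compact metrizable space `K`, a point
`u ∈ K` and a generalized limit `LIM`: the time averages
`T ↦ (1/T) ∫_t^{t+T} φ(σ(s,u)) ds` (extended by `φ(σ(t,u))` at `T = 0`) are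
bounded continuous functions of `T`, and there exists a Borel probability
measure `ρ` on `K`, invariant under the semiflow, with
`∫ φ dρ = LIM` of those time averages, for every continuous `φ` and every
`t ≥ 0` (in particular the value is independent of `t`). -/
theorem exists_timeAverage_invariant_measure
    {K : Type*} [TopologicalSpace K] [CompactSpace K]
    [TopologicalSpace.MetrizableSpace K] [MeasurableSpace K] [BorelSpace K]
    (σ : ℝ≥0 → K → K)
    (hσ0 : ∀ v, σ 0 v = v)
    (hσadd : ∀ (t s : ℝ≥0) (v : K), σ (t + s) v = σ t (σ s v))
    (hσcont : Continuous fun p : ℝ≥0 × K => σ p.1 p.2)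
    (u : K)
    (LIM : BoundedContinuousFunction ℝ≥0 ℝ →ₗ[ℝ] ℝ)
    (hLIMpos : ∀ g : BoundedContinuousFunction ℝ≥0 ℝ, (∀ s, 0 ≤ g s) → 0 ≤ LIM g)
    (hLIMlim : ∀ (g : BoundedContinuousFunction ℝ≥0 ℝ) (a : ℝ),
      Tendsto (fun T => g T) atTop (𝓝 a) → LIM g = a) :
    (∀ (φ : C(K, ℝ)) (t : ℝ≥0), ∃ g : BoundedContinuousFunction ℝ≥0 ℝ,
      ∀ T : ℝ≥0, g T = if T = 0 then φ (σ t u)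
        else (T : ℝ)⁻¹ * ∫ s in (t : ℝ)..((t : ℝ) + (T : ℝ)), φ (σ s.toNNReal u)) ∧
    ∃ ρ : Measure K, IsProbabilityMeasure ρ ∧
      (∀ (τ : ℝ≥0) (E : Set K), MeasurableSet E → ρ (σ τ ⁻¹' E) = ρ E) ∧
      (∀ (φ : C(K, ℝ)) (t : ℝ≥0) (g : BoundedContinuousFunction ℝ≥0 ℝ),
        (∀ T : ℝ≥0, g T = if T = 0 then φ (σ t u)
          else (T : ℝ)⁻¹ * ∫ s in (t : ℝ)..((t : ℝ) + (T : ℝ)), φ (σ s.toNNReal u)) →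
        ∫ v, φ v ∂ρ = LIM g) := by
  -- the positive normalized linear functional given by generalized-limit time averages
  set Λ₀ : C(K, ℝ) → ℝ := fun φ => LIM (GB σ u hσcont φ 0) with hΛ₀
  have hpos₀ : ∀ f : C(K, ℝ), (∀ x, 0 ≤ f x) → 0 ≤ Λ₀ f := fun f hf =>
    hLIMpos _ (GB_nonneg σ u hσcont f hf 0)
  have hadd₀ : ∀ f g : C(K, ℝ), Λ₀ (f + g) = Λ₀ f + Λ₀ g := fun f g => by
    rw [hΛ₀]
    simp only
    rw [GB_add σ u hσcont f g 0, map_add]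
  have hsmul₀ : ∀ (c : ℝ) (f : C(K, ℝ)), Λ₀ (c • f) = c * Λ₀ f := fun c f => by
    rw [hΛ₀]
    simp only
    rw [GB_smul σ u hσcont c f 0, LinearMap.map_smul, smul_eq_mul]
  have hΛ1₀ : Λ₀ 1 = 1 := by
    refine hLIMlim _ 1 ?_
    have h1 : ∀ T, GB σ u hσcont (1 : C(K, ℝ)) 0 T = 1 := GB_one σ u hσcont 0
    simp only [h1]
    exact tendsto_const_nhds
  set ρ : Measure K := rμ Λ₀ hpos₀ hadd₀ with hρ
  have hprob : IsProbabilityMeasure ρ := rμ_prob Λ₀ hpos₀ hadd₀ hΛ1₀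
  have hint : ∀ φ : C(K, ℝ), ∫ x, φ x ∂ρ = Λ₀ φ := fun φ =>
    integral_eq Λ₀ hpos₀ hadd₀ hsmul₀ hΛ1₀ φ
  refine ⟨fun φ t => ⟨GB σ u hσcont φ t, fun T => rfl⟩, ρ, hprob, ?_, ?_⟩
  · -- invariance
    intro τ E hE
    have hστ : Continuous fun v => σ τ v :=
      hσcont.comp (continuous_const.prodMk continuous_id)
    have hinv_int : ∀ φ : C(K, ℝ), ∫ v, φ (σ τ v) ∂ρ = ∫ v, φ v ∂ρ := by
      intro φ
      have h1 := hint (φ.comp ⟨fun v => σ τ v, hστ⟩)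
      have h2 : Λ₀ (φ.comp ⟨fun v => σ τ v, hστ⟩) = Λ₀ φ := by
        rw [hΛ₀]
        simp only
        rw [GB_shift σ u hσcont hσ0 hσadd φ τ hστ, tindep σ u hσcont LIM hLIMlim φ τ]
      rw [h2] at h1
      exact h1.trans ((hint φ).symm)
    have hmapped : Measure.map (σ τ) ρ = ρ := by
      haveI : IsProbabilityMeasure (Measure.map (σ τ) ρ) :=
        Measure.isProbabilityMeasure_map hστ.measurable.aemeasurable
      refine ext_of_forall_lintegral_eq_of_IsFiniteMeasure ?_
      intro f
      set φf : C(K, ℝ) := ⟨fun x => (f x : ℝ), NNReal.continuous_coe.comp f.continuous⟩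
        with hφf
      have i1 : Integrable (fun x => ((f x : ℝ))) ρ := by
        exact (BoundedContinuousFunction.mkOfCompact φf).integrable (μ := ρ)
      have i2 : Integrable (fun x => ((f (σ τ x) : ℝ))) ρ := by
        exact (BoundedContinuousFunction.mkOfCompact
          (φf.comp ⟨fun v => σ τ v, hστ⟩)).integrable (μ := ρ)
      calc ∫⁻ x, (f x : ℝ≥0∞) ∂(Measure.map (σ τ) ρ)
          = ∫⁻ x, ((f (σ τ x) : ℝ≥0)) ∂ρ :=
            lintegral_map (measurable_coe_nnreal_ennreal.comp f.continuous.measurable)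
              hστ.measurable
      _ = ENNReal.ofReal (∫ x, ((f (σ τ x) : ℝ)) ∂ρ) := lintegral_coe_eq_integral _ i2
      _ = ENNReal.ofReal (∫ x, ((f x : ℝ)) ∂ρ) := congrArg ENNReal.ofReal (hinv_int φf)
      _ = ∫⁻ x, (f x : ℝ≥0∞) ∂ρ := (lintegral_coe_eq_integral _ i1).symm
    conv_rhs => rw [← hmapped]
    rw [Measure.map_apply hστ.measurable hE]
  · -- the integral identity
    intro φ t g hg
    have hgeq : g = GB σ u hσcont φ t := by
      ext T
      rw [hg T]
      rfl
    rw [hint φ, hgeq, hΛ₀]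
    simp only
    rw [tindep σ u hσcont LIM hLIMlim φ t]
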